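/- arXiv:1507.07444 — 3 statements merged into one kernel-verified Lean document; each statement's English description precedes it below -/
import Mathlib

section
/- Let D ⊆ ℂ be a bounded measurable set, let F : ℂ → ℂ be integrable with support in D, and let c ∈ ℂ with d := dist(c, D) > 0. Define w(z) = (1/2π) ∫_D F(z')/(z − z') dA(z'). Then for every z with |z − c| < d, the series expansion w(z) = −(1/2π) ∑_{j=0}^∞ (z − c)^j ∫_D F(z') / (z' − c)^{j+1} dA(z') holds, with the series converging absolutely. -/
open MeasureTheory

theorem cauchy_area_potential_taylor_expansion
    (D : Set ℂ) (hD : MeasurableSet D) (hDb : Bornology.IsBounded D)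
    (F : ℂ → ℂ) (hF : Integrable F)
    (hsupp : Function.support F ⊆ D)
    (c : ℂ) (hd : 0 < Metric.infDist c D)
    (w : ℂ → ℂ)
    (hw : ∀ z, w z = ((2 * Real.pi : ℝ) : ℂ)⁻¹ * ∫ z' in D, F z' / (z - z')) :
    ∀ z : ℂ, ‖z - c‖ < Metric.infDist c D →
      (Summable fun j : ℕ =>
        ‖(z - c) ^ j * ∫ z' in D, F z' / (z' - c) ^ (j + 1)‖) ∧
      w z = -((2 * Real.pi : ℝ) : ℂ)⁻¹ *
        ∑' j : ℕ, (z - c) ^ j * ∫ z' in D, F z' / (z' - c) ^ (j + 1) := by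
  intro z hz
  set d := Metric.infDist c D with hdef
  set r := ‖z - c‖ with hrdef
  have hrnn : 0 ≤ r := norm_nonneg _
  have hmem : ∀ z' ∈ D, d ≤ ‖z' - c‖ := by
    intro z' hz'
    have h1 := Metric.infDist_le_dist_of_mem (x := c) hz'
    rw [Complex.dist_eq] at h1
    rwa [norm_sub_rev] at h1
  have hFD : Integrable F (volume.restrict D) := hF.restrict
  set M := ∫ z' in D, ‖F z'‖ with hMdef
  have hMnn : 0 ≤ M := integral_nonneg (fun _ => norm_nonneg _)
  -- the pointwise terms
  set f : ℕ → ℂ → ℂ := fun j z' => (z - c) ^ j / (z' - c) ^ (j + 1) * F z' with hfdef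
  have hgmeas : ∀ j : ℕ, AEStronglyMeasurable
      (fun z' : ℂ => (z - c) ^ j / (z' - c) ^ (j + 1)) (volume.restrict D) := by
    intro j
    exact (measurable_const.div ((measurable_id.sub_const c).pow_const _)).aestronglyMeasurable
  have hbound : ∀ j : ℕ, ∀ z' ∈ D,
      ‖(z - c) ^ j / (z' - c) ^ (j + 1)‖ ≤ r ^ j / d ^ (j + 1) := by
    intro j z' hz'
    rw [norm_div, norm_pow, norm_pow]
    have h1 : d ≤ ‖z' - c‖ := hmem z' hz'
    gcongr
  have hfint : ∀ j, Integrable (f j) (volume.restrict D) := by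
    intro j
    apply hFD.bdd_mul (hgmeas j) (c := r ^ j / d ^ (j + 1))
    filter_upwards [ae_restrict_mem hD] with z' hz'
    exact hbound j z' hz'
  have hnormint : ∀ j, (∫ z' in D, ‖f j z'‖) ≤ r ^ j / d ^ (j + 1) * M := by
    intro j
    rw [hMdef, ← integral_const_mul]
    apply integral_mono_of_nonneg (ae_of_all _ fun z' => norm_nonneg _)
      (hFD.norm.const_mul _)
    filter_upwards [ae_restrict_mem hD] with z' hz'
    rw [hfdef]
    simp only [norm_mul]
    exact mul_le_mul_of_nonneg_right (hbound j z' hz') (norm_nonneg _)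
  have hgeo : Summable fun j : ℕ => r ^ j / d ^ (j + 1) * M := by
    have h : ∀ j : ℕ, r ^ j / d ^ (j + 1) * M = (M / d) * (r / d) ^ j := by
      intro j
      rw [div_pow, pow_succ]
      field_simp
    simp only [h]
    exact (summable_geometric_of_lt_one (by positivity)
      (by rw [div_lt_one hd]; exact hz)).mul_left _
  have hSnorm : Summable fun j : ℕ => ∫ z' in D, ‖f j z'‖ :=
    Summable.of_nonneg_of_le (fun j => integral_nonneg fun _ => norm_nonneg _)
      hnormint hgeo
  have hterm : ∀ j : ℕ, ‖(z - c) ^ j * ∫ z' in D, F z' / (z' - c) ^ (j + 1)‖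
      ≤ ∫ z' in D, ‖f j z'‖ := by
    intro j
    have he : (z - c) ^ j * ∫ z' in D, F z' / (z' - c) ^ (j + 1)
        = ∫ z' in D, f j z' := by
      rw [← integral_const_mul]
      apply integral_congr_ae
      apply ae_of_all
      intro z'
      rw [hfdef]
      simp only
      ring
    rw [he]
    exact norm_integral_le_integral_norm _
  have hpt : ∀ z' ∈ D, ∑' j : ℕ, f j z' = -(F z' / (z - z')) := by
    intro z' hz'
    have hdz : d ≤ ‖z' - c‖ := hmem z' hz'
    have hne : z' - c ≠ 0 := by
      intro h0
      rw [h0] at hdz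
      simp only [norm_zero] at hdz
      linarith
    set q := (z - c) / (z' - c) with hq
    have hqlt : ‖q‖ < 1 := by
      have hpos : (0 : ℝ) < ‖z' - c‖ := lt_of_lt_of_le hd hdz
      rw [hq, norm_div, div_lt_one hpos]
      exact lt_of_lt_of_le hz hdz
    have hzz : z' - z ≠ 0 := by
      intro h0
      have hze : z' = z := sub_eq_zero.mp h0
      rw [hze] at hdz
      exact absurd hdz (not_le.mpr hz)
    have h1 : ∀ j : ℕ, f j z' = q ^ j * ((z' - c)⁻¹ * F z') := by
      intro j
      rw [hfdef, hq]
      simp only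
      rw [div_pow, pow_succ]
      field_simp
    calc ∑' j : ℕ, f j z' = ∑' j : ℕ, q ^ j * ((z' - c)⁻¹ * F z') := by
          exact tsum_congr h1
      _ = (∑' j : ℕ, q ^ j) * ((z' - c)⁻¹ * F z') := tsum_mul_right
      _ = (1 - q)⁻¹ * ((z' - c)⁻¹ * F z') := by
          rw [tsum_geometric_of_norm_lt_one hqlt]
      _ = -(F z' / (z - z')) := by
          rw [hq]
          have h1q : (1 : ℂ) - (z - c) / (z' - c) = (z' - z) / (z' - c) := by
            field_simp
            ring
          rw [h1q]
          have hzz' : z - z' ≠ 0 := sub_ne_zero.mpr (Ne.symm (sub_ne_zero.mp hzz))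
          field_simp
          ring
  have hswap := integral_tsum_of_summable_integral_norm hfint hSnorm
  have hint_eq : (∫ z' in D, F z' / (z - z'))
      = -∑' j : ℕ, ∫ z' in D, f j z' := by
    rw [hswap, ← integral_neg]
    apply setIntegral_congr_fun hD
    intro z' hz'
    show F z' / (z - z') = -∑' j : ℕ, f j z'
    rw [hpt z' hz']
    ring
  have hj : ∀ j : ℕ, (∫ z' in D, f j z')
      = (z - c) ^ j * ∫ z' in D, F z' / (z' - c) ^ (j + 1) := by
    intro j
    rw [← integral_const_mul]
    apply integral_congr_ae
    apply ae_of_all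
    intro z'
    rw [hfdef]
    simp only
    ring
  refine ⟨Summable.of_nonneg_of_le (fun j => norm_nonneg _) hterm hSnorm, ?_⟩
  rw [hw z, hint_eq, tsum_congr hj]
  ring
end

section
/- Let γ : (−ε, ε) → ℝ² be a twice continuously differentiable unit-speed planar curve (‖γ'(t)‖ = 1 for all t), let n(t) := (−γ₂'(t), γ₁'(t)) be the rotated unit normal, and let κ := ⟨γ''(0), n(0)⟩ be the signed curvature at t = 0. Then lim_{t → 0, t ≠ 0} ⟨γ(0) − γ(t), n(t)⟩ / ‖γ(0) − γ(t)‖² = κ / 2. Consequently, the normal derivative of the 2D Laplace Green's function G(x,x') = log‖x − x'‖/(2π) with respect to x' ∈ ∂D, i.e. G_n(x,x') = (1/2π) ⟨x − x', n(x')⟩/‖x − x'‖², extends continuously to the diagonal of a C² boundary curve with value κ(x)/(4π). -/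
open Filter

/-- Euclidean dot product on ℝ². -/
def dot (a b : ℝ × ℝ) : ℝ := a.1 * b.1 + a.2 * b.2

/-- Squared Euclidean norm on ℝ². -/
def normsq (a : ℝ × ℝ) : ℝ := a.1 ^ 2 + a.2 ^ 2

private lemma hasDerivAt_fst' {f : ℝ → ℝ × ℝ} {v : ℝ × ℝ} {t : ℝ}
    (h : HasDerivAt f v t) : HasDerivAt (fun u => (f u).1) v.1 t := by
  simpa using (h.hasFDerivAt.fst).hasDerivAt

private lemma hasDerivAt_snd' {f : ℝ → ℝ × ℝ} {v : ℝ × ℝ} {t : ℝ}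
    (h : HasDerivAt f v t) : HasDerivAt (fun u => (f u).2) v.2 t := by
  simpa using (h.hasFDerivAt.snd).hasDerivAt

theorem green_normal_derivative_diagonal_limit
    (ε : ℝ) (hε : 0 < ε)
    (γ : ℝ → ℝ × ℝ) (hγ : ContDiffOn ℝ 2 γ (Set.Ioo (-ε) ε))
    (hunit : ∀ t ∈ Set.Ioo (-ε) ε, normsq (deriv γ t) = 1)
    (n : ℝ → ℝ × ℝ) (hn : ∀ t, n t = (-(deriv γ t).2, (deriv γ t).1))
    (κ : ℝ) (hκ : κ = dot (deriv (deriv γ) 0) (n 0)) :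
    Tendsto (fun t => dot (γ 0 - γ t) (n t) / normsq (γ 0 - γ t))
      (nhdsWithin 0 {(0 : ℝ)}ᶜ) (nhds (κ / 2)) ∧
    Tendsto (fun t => (2 * Real.pi)⁻¹ * (dot (γ 0 - γ t) (n t) / normsq (γ 0 - γ t)))
      (nhdsWithin 0 {(0 : ℝ)}ᶜ) (nhds (κ / (4 * Real.pi))) := by
  have h0 : (0:ℝ) ∈ Set.Ioo (-ε) ε := ⟨by linarith, hε⟩
  have hmem : Set.Ioo (-ε) ε ∈ nhds (0:ℝ) := isOpen_Ioo.mem_nhds h0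
  have hγ1 : ContDiffOn ℝ 1 (deriv γ) (Set.Ioo (-ε) ε) :=
    hγ.deriv_of_isOpen isOpen_Ioo (by norm_num)
  have hdγ : ∀ t ∈ Set.Ioo (-ε) ε, HasDerivAt γ (deriv γ t) t := fun t ht =>
    ((hγ.differentiableOn (by norm_num) t ht).differentiableAt
      (isOpen_Ioo.mem_nhds ht)).hasDerivAt
  have hdγ' : ∀ t ∈ Set.Ioo (-ε) ε, HasDerivAt (deriv γ) (deriv (deriv γ) t) t := fun t ht =>
    ((hγ1.differentiableOn one_ne_zero t ht).differentiableAt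
      (isOpen_Ioo.mem_nhds ht)).hasDerivAt
  have hcont2 : ContinuousAt (deriv (deriv γ)) 0 :=
    (hγ1.continuousOn_deriv_of_isOpen isOpen_Ioo (le_refl _)).continuousAt hmem
  have hcont1 : ContinuousAt (deriv γ) 0 := (hγ1.continuousOn).continuousAt hmem
  have hcont0 : ContinuousAt γ 0 := (hγ.continuousOn).continuousAt hmem
  set c1 : ℝ := (γ 0).1 with hc1
  set c2 : ℝ := (γ 0).2 with hc2
  set a1 : ℝ := (deriv γ 0).1 with ha1
  set a2 : ℝ := (deriv γ 0).2 with ha2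
  set b1 : ℝ := (deriv (deriv γ) 0).1 with hb1def
  set b2 : ℝ := (deriv (deriv γ) 0).2 with hb2def
  -- numerator and its derivative
  set F : ℝ → ℝ := fun t => (c1 - (γ t).1) * (-(deriv γ t).2) + (c2 - (γ t).2) * ((deriv γ t).1)
    with hF
  set F' : ℝ → ℝ := fun t =>
    (c1 - (γ t).1) * (-(deriv (deriv γ) t).2) + (c2 - (γ t).2) * ((deriv (deriv γ) t).1) with hF'
  have hFderiv : ∀ t ∈ Set.Ioo (-ε) ε, HasDerivAt F (F' t) t := by
    intro t ht
    have hg1 := hasDerivAt_fst' (hdγ t ht)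
    have hg2 := hasDerivAt_snd' (hdγ t ht)
    have hq1 := hasDerivAt_fst' (hdγ' t ht)
    have hq2 := hasDerivAt_snd' (hdγ' t ht)
    have h := ((((hasDerivAt_const t c1).sub hg1).mul hq2.neg).add
      (((hasDerivAt_const t c2).sub hg2).mul hq1))
    refine h.congr_deriv ?_
    simp only [hF', Pi.sub_apply, Pi.neg_apply]
    ring
  -- slope limits
  have hslope1 : Tendsto (fun t => (c1 - (γ t).1) / t) (nhdsWithin 0 {(0:ℝ)}ᶜ) (nhds (-a1)) := by
    have h := (hasDerivAt_iff_tendsto_slope.mp (hasDerivAt_fst' (hdγ 0 h0))).neg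
    refine h.congr (fun t => ?_)
    rw [slope_def_field, sub_zero, ← neg_div, neg_sub, ← hc1]
  have hslope2 : Tendsto (fun t => (c2 - (γ t).2) / t) (nhdsWithin 0 {(0:ℝ)}ᶜ) (nhds (-a2)) := by
    have h := (hasDerivAt_iff_tendsto_slope.mp (hasDerivAt_snd' (hdγ 0 h0))).neg
    refine h.congr (fun t => ?_)
    rw [slope_def_field, sub_zero, ← neg_div, neg_sub, ← hc2]
  -- continuity limits for second derivative components
  have hb1 : Tendsto (fun t => (deriv (deriv γ) t).1) (nhdsWithin 0 {(0:ℝ)}ᶜ) (nhds b1) :=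
    ((continuous_fst.tendsto _).comp hcont2).mono_left nhdsWithin_le_nhds
  have hb2 : Tendsto (fun t => (deriv (deriv γ) t).2) (nhdsWithin 0 {(0:ℝ)}ᶜ) (nhds b2) :=
    ((continuous_snd.tendsto _).comp hcont2).mono_left nhdsWithin_le_nhds
  -- quotient-of-derivatives limit
  have hdiv : Tendsto (fun t => F' t / (2 * t)) (nhdsWithin 0 {(0:ℝ)}ᶜ) (nhds (κ / 2)) := by
    have hlim : Tendsto
        (fun t => (((c1 - (γ t).1) / t) * (-(deriv (deriv γ) t).2)
          + ((c2 - (γ t).2) / t) * ((deriv (deriv γ) t).1)) / 2)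
        (nhdsWithin 0 {(0:ℝ)}ᶜ) (nhds (((-a1) * (-b2) + (-a2) * b1) / 2)) :=
      ((hslope1.mul hb2.neg).add (hslope2.mul hb1)).div_const 2
    have hval : ((-a1) * (-b2) + (-a2) * b1) / 2 = κ / 2 := by
      rw [hκ]; simp only [dot, hn]; ring
    rw [hval] at hlim
    refine hlim.congr' ?_
    filter_upwards [self_mem_nhdsWithin] with t ht
    have ht' : (t:ℝ) ≠ 0 := ht
    simp only [hF']
    field_simp
  -- L'Hopital: F t / t^2 → κ/2
  have hL1 : Tendsto (fun t => F t / t ^ 2) (nhdsWithin 0 {(0:ℝ)}ᶜ) (nhds (κ / 2)) := by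
    refine HasDerivAt.lhopital_zero_nhdsNE (f' := F') (g' := fun t => 2 * t) ?_ ?_ ?_ ?_ ?_ hdiv
    · filter_upwards [mem_nhdsWithin_of_mem_nhds hmem] with t ht using hFderiv t ht
    · filter_upwards with t
      simpa using hasDerivAt_pow 2 t
    · filter_upwards [self_mem_nhdsWithin] with t ht
      exact mul_ne_zero two_ne_zero ht
    · have h1 : ContinuousAt (fun t => (γ t).1) 0 := continuous_fst.continuousAt.comp hcont0
      have h2 : ContinuousAt (fun t => (γ t).2) 0 := continuous_snd.continuousAt.comp hcont0
      have hq1 : ContinuousAt (fun t => (deriv γ t).1) 0 :=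
        continuous_fst.continuousAt.comp hcont1
      have hq2 : ContinuousAt (fun t => (deriv γ t).2) 0 :=
        continuous_snd.continuousAt.comp hcont1
      have hFc : ContinuousAt F 0 :=
        ((continuousAt_const.sub h1).mul hq2.neg).add ((continuousAt_const.sub h2).mul hq1)
      have hF0 : F 0 = 0 := by simp [hF, hc1, hc2]
      have := hFc.tendsto
      rw [hF0] at this
      exact this.mono_left nhdsWithin_le_nhds
    · have : Tendsto (fun t : ℝ => t ^ 2) (nhds 0) (nhds 0) := by
        simpa using (continuous_pow 2).tendsto (0:ℝ)
      exact this.mono_left nhdsWithin_le_nhds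
  -- denominator: normsq (γ 0 - γ t) / t^2 → 1
  set N : ℝ → ℝ := fun t => (c1 - (γ t).1) ^ 2 + (c2 - (γ t).2) ^ 2 with hN
  have hL2 : Tendsto (fun t => N t / t ^ 2) (nhdsWithin 0 {(0:ℝ)}ᶜ) (nhds 1) := by
    have hlim : Tendsto (fun t => ((c1 - (γ t).1) / t) ^ 2 + ((c2 - (γ t).2) / t) ^ 2)
        (nhdsWithin 0 {(0:ℝ)}ᶜ) (nhds ((-a1) ^ 2 + (-a2) ^ 2)) :=
      (hslope1.pow 2).add (hslope2.pow 2)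
    have hval : (-a1) ^ 2 + (-a2) ^ 2 = 1 := by
      have := hunit 0 h0
      simp only [normsq] at this
      rw [← this]; ring
    rw [hval] at hlim
    refine hlim.congr (fun t => ?_)
    simp only [hN]
    rw [div_pow, div_pow, ← add_div]
  have hL2' : Tendsto (fun t => t ^ 2 / N t) (nhdsWithin 0 {(0:ℝ)}ᶜ) (nhds 1) := by
    have := hL2.inv₀ one_ne_zero
    rw [inv_one] at this
    refine this.congr (fun t => ?_)
    rw [inv_div]
  -- combine
  have hmain : Tendsto (fun t => dot (γ 0 - γ t) (n t) / normsq (γ 0 - γ t))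
      (nhdsWithin 0 {(0:ℝ)}ᶜ) (nhds (κ / 2)) := by
    have hprod : Tendsto (fun t => (F t / t ^ 2) * (t ^ 2 / N t))
        (nhdsWithin 0 {(0:ℝ)}ᶜ) (nhds (κ / 2 * 1)) := hL1.mul hL2'
    rw [mul_one] at hprod
    refine hprod.congr' ?_
    filter_upwards [self_mem_nhdsWithin] with t ht
    have ht' : (t:ℝ) ≠ 0 := ht
    have heq : (F t / t ^ 2) * (t ^ 2 / N t) = F t / N t := by
      rw [div_mul_div_comm, mul_comm (t ^ 2) (N t), mul_div_mul_right _ _ (pow_ne_zero 2 ht')]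
    rw [heq]
    simp only [hF, hN, dot, normsq, hn, Prod.fst_sub, Prod.snd_sub, hc1, hc2]
  refine ⟨hmain, ?_⟩
  have h2 := hmain.const_mul (2 * Real.pi)⁻¹
  have hval : (2 * Real.pi)⁻¹ * (κ / 2) = κ / (4 * Real.pi) := by
    rw [inv_mul_eq_div, div_div]
    ring_nf
  rwa [hval] at h2
end

section
/- Let k, c₁, c₂ ∈ ℝ, set α = 2 k² (c₁² − c₂²), and define g(x,y) = c₁ cosh(k y) − c₂ cos(k x) and u(x, y) = 2 log g(x,y) on the open set Ω = { (x,y) ∈ ℝ² : g(x,y) > 0 }. Then u satisfies the Poisson–Boltzmann equation Δu(x,y) = α e^{−u(x,y)} for all (x,y) ∈ Ω, and u vanishes on the level curve { (x,y) : g(x,y) = 1 }. -/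
/-- Partial derivative in the first (x) variable. -/
noncomputable def pdx (f : ℝ × ℝ → ℝ) (p : ℝ × ℝ) : ℝ := fderiv ℝ f p (1, 0)

/-- Partial derivative in the second (y) variable. -/
noncomputable def pdy (f : ℝ × ℝ → ℝ) (p : ℝ × ℝ) : ℝ := fderiv ℝ f p (0, 1)

/-- The two-dimensional Laplacian. -/
noncomputable def lap (f : ℝ × ℝ → ℝ) (p : ℝ × ℝ) : ℝ :=
  pdx (pdx f) p + pdy (pdy f) p

noncomputable def Pfst : ℝ × ℝ →L[ℝ] ℝ := ContinuousLinearMap.fst ℝ ℝ ℝ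
noncomputable def Psnd : ℝ × ℝ →L[ℝ] ℝ := ContinuousLinearMap.snd ℝ ℝ ℝ

lemma comp_fst_fderiv {f : ℝ → ℝ} {f' : ℝ} (p : ℝ × ℝ) (h : HasDerivAt f f' p.1) :
    HasFDerivAt (fun q : ℝ × ℝ => f q.1) (f' • Pfst) p :=
  h.comp_hasFDerivAt p (ContinuousLinearMap.fst ℝ ℝ ℝ).hasFDerivAt

lemma comp_snd_fderiv {f : ℝ → ℝ} {f' : ℝ} (p : ℝ × ℝ) (h : HasDerivAt f f' p.2) :
    HasFDerivAt (fun q : ℝ × ℝ => f q.2) (f' • Psnd) p :=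
  h.comp_hasFDerivAt p (ContinuousLinearMap.snd ℝ ℝ ℝ).hasFDerivAt

lemma g_fderiv (k c₁ c₂ : ℝ) (p : ℝ × ℝ) :
    HasFDerivAt (fun q : ℝ × ℝ => c₁ * Real.cosh (k * q.2) - c₂ * Real.cos (k * q.1))
      ((c₂ * k * Real.sin (k * p.1)) • Pfst + (c₁ * k * Real.sinh (k * p.2)) • Psnd) p := by
  have h1 : HasDerivAt (fun t : ℝ => c₁ * Real.cosh (k * t)) (c₁ * k * Real.sinh (k * p.2)) p.2 := by
    have := ((Real.hasDerivAt_cosh (k * p.2)).comp p.2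
      ((hasDerivAt_id p.2).const_mul k)).const_mul c₁
    exact this.congr_deriv (by ring)
  have h2 : HasDerivAt (fun t : ℝ => c₂ * Real.cos (k * t)) (-(c₂ * k * Real.sin (k * p.1))) p.1 := by
    have := ((Real.hasDerivAt_cos (k * p.1)).comp p.1
      ((hasDerivAt_id p.1).const_mul k)).const_mul c₂
    exact this.congr_deriv (by ring)
  have := (comp_snd_fderiv p h1).sub (comp_fst_fderiv p h2)
  exact this.congr_fderiv (by module)

lemma A_fderiv (k c₂ : ℝ) (p : ℝ × ℝ) :
    HasFDerivAt (fun q : ℝ × ℝ => 2 * (c₂ * k * Real.sin (k * q.1)))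
      ((2 * c₂ * k * k * Real.cos (k * p.1)) • Pfst) p := by
  have h : HasDerivAt (fun t : ℝ => 2 * (c₂ * k * Real.sin (k * t)))
      (2 * c₂ * k * k * Real.cos (k * p.1)) p.1 := by
    have := (((Real.hasDerivAt_sin (k * p.1)).comp p.1
      ((hasDerivAt_id p.1).const_mul k)).const_mul (c₂ * k)).const_mul 2
    exact this.congr_deriv (by ring)
  exact comp_fst_fderiv p h

lemma B_fderiv (k c₁ : ℝ) (p : ℝ × ℝ) :
    HasFDerivAt (fun q : ℝ × ℝ => 2 * (c₁ * k * Real.sinh (k * q.2)))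
      ((2 * c₁ * k * k * Real.cosh (k * p.2)) • Psnd) p := by
  have h : HasDerivAt (fun t : ℝ => 2 * (c₁ * k * Real.sinh (k * t)))
      (2 * c₁ * k * k * Real.cosh (k * p.2)) p.2 := by
    have := (((Real.hasDerivAt_sinh (k * p.2)).comp p.2
      ((hasDerivAt_id p.2).const_mul k)).const_mul (c₁ * k)).const_mul 2
    exact this.congr_deriv (by ring)
  exact comp_snd_fderiv p h

lemma pb_algebra (k c₁ c₂ s c S C : ℝ) (hs : s^2+c^2=1) (hC : C^2-S^2=1)
    (hne : c₁*C - c₂*c ≠ 0) :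
    2*(c₂*k*s)*(-((c₁*C-c₂*c)^2)⁻¹*(c₂*k*s)) + (c₁*C-c₂*c)⁻¹*(2*c₂*k*k*c)
      + (2*(c₁*k*S)*(-((c₁*C-c₂*c)^2)⁻¹*(c₁*k*S)) + (c₁*C-c₂*c)⁻¹*(2*c₁*k*k*C))
    = 2*k^2*(c₁^2-c₂^2) * ((c₁*C-c₂*c)^2)⁻¹ := by
  have h1 : (c₁*C-c₂*c)⁻¹ = (c₁*C-c₂*c) * ((c₁*C-c₂*c)^2)⁻¹ := by
    field_simp
  rw [h1]
  rw [show (2*(c₂*k*s)*(-((c₁*C-c₂*c)^2)⁻¹*(c₂*k*s)) + (c₁*C-c₂*c) * ((c₁*C-c₂*c)^2)⁻¹*(2*c₂*k*k*c)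
      + (2*(c₁*k*S)*(-((c₁*C-c₂*c)^2)⁻¹*(c₁*k*S)) + (c₁*C-c₂*c) * ((c₁*C-c₂*c)^2)⁻¹*(2*c₁*k*k*C)))
    = (-(2*(c₂*k*s)*(c₂*k*s)) + (c₁*C-c₂*c)*(2*c₂*k*k*c) + (-(2*(c₁*k*S)*(c₁*k*S)) + (c₁*C-c₂*c)*(2*c₁*k*k*C))) * ((c₁*C-c₂*c)^2)⁻¹ from by ring]
  congr 1
  linear_combination (2*k^2*c₁^2) * hC - (2*k^2*c₂^2) * hs

theorem poisson_boltzmann_exact_solution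
    (k c₁ c₂ : ℝ) (α : ℝ) (hα : α = 2 * k ^ 2 * (c₁ ^ 2 - c₂ ^ 2))
    (g : ℝ × ℝ → ℝ)
    (hg : ∀ p : ℝ × ℝ, g p = c₁ * Real.cosh (k * p.2) - c₂ * Real.cos (k * p.1))
    (u : ℝ × ℝ → ℝ)
    (hu : ∀ p : ℝ × ℝ, u p = 2 * Real.log (g p)) :
    (∀ p : ℝ × ℝ, 0 < g p → lap u p = α * Real.exp (-u p)) ∧
    (∀ p : ℝ × ℝ, g p = 1 → u p = 0) := by
  have hgE : g = fun q : ℝ × ℝ => c₁ * Real.cosh (k * q.2) - c₂ * Real.cos (k * q.1) :=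
    funext hg
  have huE : u = fun q : ℝ × ℝ => 2 * Real.log (g q) := funext hu
  constructor
  · intro p hp
    -- the total derivative of g everywhere
    have hGd : ∀ q : ℝ × ℝ, HasFDerivAt g
        ((c₂ * k * Real.sin (k * q.1)) • Pfst + (c₁ * k * Real.sinh (k * q.2)) • Psnd) q := by
      intro q; rw [hgE]; exact g_fderiv k c₁ c₂ q
    -- Ω is open
    have hΩ : IsOpen {q : ℝ × ℝ | 0 < g q} := by
      have hc : Continuous g := by
        rw [hgE]; fun_prop
      exact isOpen_lt continuous_const hc
    -- derivative of u on Ω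
    have hud : ∀ q : ℝ × ℝ, 0 < g q → HasFDerivAt u
        ((2 : ℝ) • ((g q)⁻¹ • ((c₂ * k * Real.sin (k * q.1)) • Pfst
          + (c₁ * k * Real.sinh (k * q.2)) • Psnd))) q := by
      intro q hq
      rw [huE]
      exact ((hGd q).log (ne_of_gt hq)).const_mul 2
    -- inverse of g
    have hinv : ∀ q : ℝ × ℝ, 0 < g q → HasFDerivAt (fun r => (g r)⁻¹)
        ((-(g q ^ 2)⁻¹) • ((c₂ * k * Real.sin (k * q.1)) • Pfst
          + (c₁ * k * Real.sinh (k * q.2)) • Psnd)) q := by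
      intro q hq
      exact (hasDerivAt_inv (ne_of_gt hq)).comp_hasFDerivAt q (hGd q)
    -- the formulas for the first partials on Ω
    have hpdx : ∀ q : ℝ × ℝ, 0 < g q →
        pdx u q = 2 * (c₂ * k * Real.sin (k * q.1)) * (g q)⁻¹ := by
      intro q hq
      unfold pdx
      rw [(hud q hq).fderiv]
      simp [Pfst, Psnd]
      ring
    have hpdy : ∀ q : ℝ × ℝ, 0 < g q →
        pdy u q = 2 * (c₁ * k * Real.sinh (k * q.2)) * (g q)⁻¹ := by
      intro q hq
      unfold pdy
      rw [(hud q hq).fderiv]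
      simp [Pfst, Psnd]
      ring
    -- second partials: pdx u agrees with the explicit formula near p
    have hmem := hΩ.mem_nhds hp
    have hEq1 : pdx u =ᶠ[nhds p] fun q => 2 * (c₂ * k * Real.sin (k * q.1)) * (g q)⁻¹ := by
      filter_upwards [hmem] with q hq using hpdx q hq
    have hEq2 : pdy u =ᶠ[nhds p] fun q => 2 * (c₁ * k * Real.sinh (k * q.2)) * (g q)⁻¹ := by
      filter_upwards [hmem] with q hq using hpdy q hq
    have hd1 : HasFDerivAt (fun q : ℝ × ℝ => 2 * (c₂ * k * Real.sin (k * q.1)) * (g q)⁻¹)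
        ((2 * (c₂ * k * Real.sin (k * p.1))) • ((-(g p ^ 2)⁻¹) •
            ((c₂ * k * Real.sin (k * p.1)) • Pfst + (c₁ * k * Real.sinh (k * p.2)) • Psnd))
          + (g p)⁻¹ • ((2 * c₂ * k * k * Real.cos (k * p.1)) • Pfst)) p :=
      HasFDerivAt.mul (A_fderiv k c₂ p) (hinv p hp)
    have hd2 : HasFDerivAt (fun q : ℝ × ℝ => 2 * (c₁ * k * Real.sinh (k * q.2)) * (g q)⁻¹)
        ((2 * (c₁ * k * Real.sinh (k * p.2))) • ((-(g p ^ 2)⁻¹) •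
            ((c₂ * k * Real.sin (k * p.1)) • Pfst + (c₁ * k * Real.sinh (k * p.2)) • Psnd))
          + (g p)⁻¹ • ((2 * c₁ * k * k * Real.cosh (k * p.2)) • Psnd)) p :=
      HasFDerivAt.mul (B_fderiv k c₁ p) (hinv p hp)
    have hxx : pdx (pdx u) p =
        2 * (c₂ * k * Real.sin (k * p.1)) * (-(g p ^ 2)⁻¹ * (c₂ * k * Real.sin (k * p.1)))
          + (g p)⁻¹ * (2 * c₂ * k * k * Real.cos (k * p.1)) := by
      show fderiv ℝ (pdx u) p (1, 0) = _
      rw [hEq1.fderiv_eq, hd1.fderiv]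
      simp [Pfst, Psnd]
    have hyy : pdy (pdy u) p =
        2 * (c₁ * k * Real.sinh (k * p.2)) * (-(g p ^ 2)⁻¹ * (c₁ * k * Real.sinh (k * p.2)))
          + (g p)⁻¹ * (2 * c₁ * k * k * Real.cosh (k * p.2)) := by
      show fderiv ℝ (pdy u) p (0, 1) = _
      rw [hEq2.fderiv_eq, hd2.fderiv]
      simp [Pfst, Psnd]
    have hexp : Real.exp (-u p) = (g p ^ 2)⁻¹ := by
      rw [hu p]
      have h2 : (2 : ℝ) * Real.log (g p) = Real.log (g p ^ 2) := by
        rw [Real.log_pow]; norm_num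
      rw [h2, Real.exp_neg, Real.exp_log (by positivity)]
    rw [lap, hxx, hyy, hexp, hα]
    have hgp := hg p
    have hne : g p ≠ 0 := ne_of_gt hp
    have hsin := Real.sin_sq_add_cos_sq (k * p.1)
    have hcosh := Real.cosh_sq_sub_sinh_sq (k * p.2)
    rw [hgp] at hne ⊢
    exact pb_algebra k c₁ c₂ _ _ _ _ hsin hcosh hne
  · intro p hp
    rw [hu p, hp, Real.log_one, mul_zero]
end
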